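/- In the platform-choice game, the fully segregated state ω_ml in which all Group A agents are on platform ℓ and all Group B agents are on platform m is a strict Nash equilibrium: a Group A agent who unilaterally moves to platform m receives payoff −δ·N^B, which is strictly less than her current payoff (N^A−1)·(1−γ_A), and a Group B agent who unilaterally moves to platform ℓ receives payoff −δ·N^A, which is strictly less than his current payoff (N^B−1)·γ_B. -/
import Mathlib


/-- Utility of a Group A agent on platform m at state (nAm, nBm). -/
noncomputable def UAm (γA δ nAm nBm : ℝ) : ℝ := (nAm - 1) * γA - nBm * δ

/-- Utility of a Group A agent on platform ℓ at state (nAm, nBm). -/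
noncomputable def UAl (NA NB γA δ nAm nBm : ℝ) : ℝ :=
  (NA - nAm - 1) * (1 - γA) - (NB - nBm) * δ

/-- Utility of a Group B agent on platform m at state (nAm, nBm). -/
noncomputable def UBm (γB δ nAm nBm : ℝ) : ℝ := -nAm * δ + (nBm - 1) * γB

/-- Utility of a Group B agent on platform ℓ at state (nAm, nBm). -/
noncomputable def UBl (NA NB γB δ nAm nBm : ℝ) : ℝ :=
  -(NA - nAm) * δ + (NB - nBm - 1) * (1 - γB)

/-- The fully segregated state ω_ml = (0, N^B) (all of Group A on ℓ, all of
Group B on m) is a strict Nash equilibrium: a Group A deviator to m (evaluated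
at the post-deviation state (1, N^B)) gets −δ·N^B < (N^A − 1)·(1 − γ_A), and a
Group B deviator to ℓ (evaluated at the post-deviation state (0, N^B − 1)) gets
−δ·N^A < (N^B − 1)·γ_B. -/
theorem omega_ml_strict_equilibrium
    (NA NB : ℕ) (hNA : 2 ≤ NA) (hNB : 2 ≤ NB)
    (γA γB δ : ℝ) (hγA : γA ∈ Set.Ioo (1/2 : ℝ) 1) (hγB : γB ∈ Set.Ioo (1/2 : ℝ) 1)
    (hδ : 0 < δ) :
    (UAm γA δ 1 NB < UAl NA NB γA δ 0 NB ∧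
      UAm γA δ 1 NB = -δ * NB ∧
      UAl NA NB γA δ 0 NB = ((NA : ℝ) - 1) * (1 - γA)) ∧
    (UBl NA NB γB δ 0 (NB - 1 : ℕ) < UBm γB δ 0 NB ∧
      UBl NA NB γB δ 0 (NB - 1 : ℕ) = -δ * NA ∧
      UBm γB δ 0 NB = ((NB : ℝ) - 1) * γB) := by
  obtain ⟨hA1, hA2⟩ := hγA
  obtain ⟨hB1, hB2⟩ := hγB
  have hNA' : (2:ℝ) ≤ NA := by exact_mod_cast hNA
  have hNB' : (2:ℝ) ≤ NB := by exact_mod_cast hNB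
  have hcast : ((NB - 1 : ℕ) : ℝ) = (NB:ℝ) - 1 := by
    have : 1 ≤ NB := by omega
    push_cast [this]; ring
  constructor
  · refine ⟨?_, by simp [UAm]; ring, by simp [UAl]⟩
    have h1 : UAm γA δ 1 NB = -δ * NB := by simp [UAm]; ring
    have h2 : UAl NA NB γA δ 0 NB = ((NA : ℝ) - 1) * (1 - γA) := by simp [UAl]
    rw [h1, h2]
    have : (0:ℝ) < ((NA:ℝ)-1) * (1-γA) := by
      apply mul_pos <;> nlinarith
    nlinarith
  · have h1 : UBl NA NB γB δ 0 (NB - 1 : ℕ) = -δ * NA := by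
      simp [UBl, hcast]; ring
    have h2 : UBm γB δ 0 NB = ((NB : ℝ) - 1) * γB := by simp [UBm]
    refine ⟨?_, h1, h2⟩
    rw [h1, h2]
    have : (0:ℝ) < ((NB:ℝ)-1) * γB := by
      apply mul_pos <;> nlinarith
    nlinarith
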